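/- Let ⟨·,·⟩ be an antisymmetric bilinear form on ℤⁿ with radical C = {z : ⟨z,·⟩ = 0}. Fix distinct elements c₁, …, c_k ∈ C and nonzero rationals q₁, …, q_k, and define f(x) = Σᵢ qᵢ·(cᵢ + x) ∈ ℚ[ℤⁿ] for x ∈ ℤⁿ. Then for every y ∈ ℤⁿ, [f(x), y] = ⟨x,y⟩·f(x+y) in ℚ[ℤⁿ] (bracket [w,v] = ⟨w,v⟩·(w+v)), and consequently the ℚ-span of {f(x) : x ∈ ℤⁿ \ C} is a Lie ideal of ℚ[ℤⁿ]. -/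

import Mathlib

/-- The bracket on the free `ℚ`-module on `ℤⁿ` defined on basis elements by
`[w, v] = ⟨w, v⟩ • (w + v)` and extended `ℚ`-bilinearly. -/
noncomputable def brQ {n : ℕ} (B : (Fin n → ℤ) → (Fin n → ℤ) → ℤ)
    (x y : (Fin n → ℤ) →₀ ℚ) : (Fin n → ℤ) →₀ ℚ :=
  x.sum fun w a => y.sum fun v b => Finsupp.single (w + v) (a * b * (B w v : ℚ))

section helpers
variable {n : ℕ} (B : (Fin n → ℤ) → (Fin n → ℤ) → ℤ)

lemma brQ_zero_left (y) : brQ B 0 y = 0 := by simp [brQ]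

lemma brQ_add_left (x x' y) : brQ B (x + x') y = brQ B x y + brQ B x' y := by
  unfold brQ
  apply Finsupp.sum_add_index
  · intro w _; simp
  · intro w _ a a'
    rw [← Finsupp.sum_add]
    congr 1; ext v b
    rw [← Finsupp.single_add]; congr 1; ring

lemma brQ_smul_left (r : ℚ) (x y) : brQ B (r • x) y = r • brQ B x y := by
  unfold brQ
  rw [Finsupp.sum_smul_index (by intro w; simp)]
  rw [Finsupp.smul_sum]
  apply Finsupp.sum_congr
  intro w _
  rw [Finsupp.smul_sum]
  apply Finsupp.sum_congr
  intro v _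
  rw [Finsupp.smul_single]
  congr 1
  rw [smul_eq_mul]; ring

lemma brQ_single_single (w v : Fin n → ℤ) (a b : ℚ) :
    brQ B (Finsupp.single w a) (Finsupp.single v b)
      = Finsupp.single (w + v) (a * b * (B w v : ℚ)) := by
  unfold brQ
  rw [Finsupp.sum_single_index (by simp), Finsupp.sum_single_index (by simp)]

lemma brQ_zero_right (x) : brQ B x 0 = 0 := by simp [brQ]

lemma brQ_add_right (x y y') : brQ B x (y + y') = brQ B x y + brQ B x y' := by
  unfold brQ
  rw [← Finsupp.sum_add]
  apply Finsupp.sum_congr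
  intro w _
  apply Finsupp.sum_add_index
  · intro v _; simp
  · intro v _ b b'
    rw [← Finsupp.single_add]; congr 1; ring

lemma brQ_sum_left {ι : Type*} (s : Finset ι) (f : ι → ((Fin n → ℤ) →₀ ℚ)) (y) :
    brQ B (∑ i ∈ s, f i) y = ∑ i ∈ s, brQ B (f i) y := by
  classical
  induction s using Finset.induction_on with
  | empty => simp [brQ_zero_left]
  | insert _ _ h ih => rw [Finset.sum_insert h, Finset.sum_insert h, brQ_add_left, ih]

end helpers

theorem stmt8 (n k : ℕ) (B : (Fin n → ℤ) →ₗ[ℤ] (Fin n → ℤ) →ₗ[ℤ] ℤ)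
    (hB : ∀ x y, B x y = - B y x)
    (c : Fin k → (Fin n → ℤ)) (hc : ∀ i, ∀ y, B (c i) y = 0)
    (hcinj : Function.Injective c)
    (q : Fin k → ℚ) (hq : ∀ i, q i ≠ 0) :
    (∀ x y : Fin n → ℤ,
      brQ (fun a b => B a b) (∑ i, Finsupp.single (c i + x) (q i)) (Finsupp.single y (1 : ℚ))
        = (B x y : ℚ) • ∑ i, Finsupp.single (c i + (x + y)) (q i)) ∧
    (∀ z ∈ Submodule.span ℚ
        {v | ∃ x : Fin n → ℤ, (¬ ∀ y, B x y = 0) ∧ v = ∑ i, Finsupp.single (c i + x) (q i)},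
      ∀ u, brQ (fun a b => B a b) z u ∈ Submodule.span ℚ
        {v | ∃ x : Fin n → ℤ, (¬ ∀ y, B x y = 0) ∧ v = ∑ i, Finsupp.single (c i + x) (q i)}) := by
  set Bf : (Fin n → ℤ) → (Fin n → ℤ) → ℤ := fun a b => B a b with hBf
  have key : ∀ (x y : Fin n → ℤ) (b : ℚ),
      brQ Bf (∑ i, Finsupp.single (c i + x) (q i)) (Finsupp.single y b)
        = (b * (B x y : ℚ)) • ∑ i, Finsupp.single (c i + (x + y)) (q i) := by
    intro x y b
    rw [brQ_sum_left, Finset.smul_sum]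
    apply Finset.sum_congr rfl
    intro i _
    rw [brQ_single_single]
    have hBc : B (c i + x) y = B x y := by
      rw [map_add]; simp [hc i y]
    rw [Finsupp.smul_single]
    simp only [hBf]
    rw [hBc, add_assoc]
    congr 1
    rw [smul_eq_mul]; ring
  constructor
  · intro x y
    have := key x y 1
    rw [one_mul] at this
    exact this
  · intro z hz u
    set S : Set ((Fin n → ℤ) →₀ ℚ) :=
      {v | ∃ x : Fin n → ℤ, (¬ ∀ y, B x y = 0) ∧ v = ∑ i, Finsupp.single (c i + x) (q i)} with hS
    induction hz using Submodule.span_induction generalizing u with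
    | mem v hv =>
      obtain ⟨x, hx, rfl⟩ := hv
      induction u using Finsupp.induction with
      | zero => rw [brQ_zero_right]; exact Submodule.zero_mem _
      | single_add y b f hyf hb ihf =>
        rw [brQ_add_right]
        refine Submodule.add_mem _ ?_ ihf
        rw [key]
        by_cases hxy : B x y = 0
        · rw [hxy]; simp
        · refine Submodule.smul_mem _ _ (Submodule.subset_span ?_)
          refine ⟨x + y, ?_, rfl⟩
          intro hall
          have h1 := hall y
          have h2 : B y y = 0 := by have := hB y y; omega
          rw [map_add] at h1
          simp only [LinearMap.add_apply] at h1
          omega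
    | zero => rw [brQ_zero_left]; exact Submodule.zero_mem _
    | add a b ha hb iha ihb =>
      rw [brQ_add_left]; exact Submodule.add_mem _ (iha u) (ihb u)
    | smul r a ha iha =>
      rw [brQ_smul_left]; exact Submodule.smul_mem _ _ (iha u)
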